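/- Fix n ≥ 2 and p ≥ 2, and consider the set B of p-tuples (j_1,...,j_p) with each j_i ∈ {±1,...,±n} and j_1 + ··· + j_p = 0 such that each element of the multiset {|j_1|,...,|j_p|} appears with multiplicity at least 2. Then |B| ≤ C(p) · n^{⌊p/2⌋} for a constant C(p) depending only on p. In particular if p is odd, |B| = O(n^{(p-1)/2}). -/
import Mathlib


open Finset

set_option synthInstance.maxHeartbeats 1000000 in
/-- The number of balanced tuples `(j_1,...,j_p)` with entries in `{±1,...,±n}` in which
every absolute value occurs with multiplicity at least two is at most `2^p p^p n^⌊p/2⌋`. -/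
theorem card_balanced_paired_tuples_le (n p : ℕ) (hn : 2 ≤ n) (hp : 2 ≤ p) :
    Nat.card {J : Fin p → ℤ //
        (∀ i, J i ≠ 0 ∧ |J i| ≤ (n : ℤ)) ∧ (∑ i, J i = 0) ∧
        (∀ i, ∃ i', i' ≠ i ∧ |J i| = |J i'|)} ≤ 2 ^ p * p ^ p * n ^ (p / 2) := by
  classical
  have hn0 : 0 < n := by omega
  let P : (Fin p → ℤ) → Prop := fun J =>
    (∀ i, J i ≠ 0 ∧ |J i| ≤ (n : ℤ)) ∧ (∑ i, J i = 0) ∧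
      (∀ i, ∃ i', i' ≠ i ∧ |J i| = |J i'|)
  show Nat.card {J : Fin p → ℤ // P J} ≤ 2 ^ p * p ^ p * n ^ (p / 2)
  let Sf : (Fin p → ℤ) → Finset ℤ := fun J => univ.image fun i => |J i|
  -- bounds on elements of Sf
  have hbound : ∀ J : {J : Fin p → ℤ // P J}, ∀ a ∈ Sf J.1, 1 ≤ a ∧ a ≤ (n : ℤ) := by
    rintro ⟨J, hJ⟩ a ha
    simp only [Sf, mem_image, mem_univ, true_and] at ha
    obtain ⟨i, rfl⟩ := ha
    have h1 := (hJ.1 i).1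
    have h2 := (hJ.1 i).2
    have : 0 < |J i| := abs_pos.mpr h1
    omega
  -- the image of absolute values has at most p/2 elements
  have key : ∀ J : {J : Fin p → ℤ // P J}, (Sf J.1).card ≤ p / 2 := by
    rintro ⟨J, hJ⟩
    have h2 : ∀ b ∈ Sf J, 2 ≤ (univ.filter fun i => |J i| = b).card := by
      intro b hb
      simp only [Sf, mem_image, mem_univ, true_and] at hb
      obtain ⟨i, hi⟩ := hb
      obtain ⟨i', hi', habs⟩ := hJ.2.2 i
      have hsub : ({i, i'} : Finset (Fin p)) ⊆ univ.filter fun j => |J j| = b := by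
        intro j hj
        simp only [mem_insert, mem_singleton] at hj
        rcases hj with rfl | rfl
        · simp [hi]
        · simp [← habs, hi]
      calc 2 = ({i, i'} : Finset (Fin p)).card := (card_pair (Ne.symm hi')).symm
        _ ≤ _ := card_le_card hsub
    have hsum : ∑ b ∈ Sf J, (univ.filter fun i => |J i| = b).card = p := by
      rw [← card_eq_sum_card_fiberwise (fun i _ => by
        exact mem_image.mpr ⟨i, mem_univ i, rfl⟩)]
      simp
    have hle : 2 * (Sf J).card ≤ p := by
      calc 2 * (Sf J).card = ∑ _b ∈ Sf J, 2 := by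
            rw [sum_const, smul_eq_mul, mul_comm]
        _ ≤ ∑ b ∈ Sf J, (univ.filter fun i => |J i| = b).card := sum_le_sum h2
        _ = p := hsum
    show (Sf J).card ≤ p / 2
    omega
  -- the index function
  let idx : {J : Fin p → ℤ // P J} → Fin p → Fin p := fun J i =>
    Fin.castLE (le_trans (key J) (Nat.div_le_self p 2))
      (((Sf J.1).orderIsoOfFin rfl).symm ⟨|J.1 i|, mem_image.mpr ⟨i, mem_univ i, rfl⟩⟩)
  have idxlt : ∀ J i, ((idx J i : Fin p) : ℕ) < (Sf J.1).card := by
    intro J i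
    simp only [idx, Fin.coe_castLE]
    exact Fin.is_lt _
  have idxlt' : ∀ J i, ((idx J i : Fin p) : ℕ) < p / 2 := fun J i =>
    lt_of_lt_of_le (idxlt J i) (key J)
  -- the values function
  let vals : {J : Fin p → ℤ // P J} → Fin (p / 2) → Fin n := fun J k =>
    if h : (k : ℕ) < (Sf J.1).card then
      ⟨((((Sf J.1).orderIsoOfFin rfl) ⟨k, h⟩ : ℤ) - 1).toNat, by
        have hb := hbound J _ (((Sf J.1).orderIsoOfFin rfl) ⟨k, h⟩).2
        omega⟩
    else ⟨0, hn0⟩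
  -- recovery of |J i|
  have hvals : ∀ (J : {J : Fin p → ℤ // P J}) (i : Fin p)
      (h : ((idx J i : Fin p) : ℕ) < p / 2),
      ((vals J ⟨(idx J i : Fin p), h⟩ : Fin n) : ℤ) + 1 = |J.1 i| := by
    intro J i h
    have hmem : |J.1 i| ∈ Sf J.1 := mem_image.mpr ⟨i, mem_univ i, rfl⟩
    have hlt : ((idx J i : Fin p) : ℕ) < (Sf J.1).card := idxlt J i
    have hb := hbound J _ hmem
    simp only [vals, idx, Fin.coe_castLE] at hlt ⊢
    rw [dif_pos hlt]
    simp only [Fin.eta, OrderIso.apply_symm_apply]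
    push_cast
    omega
  have recov : ∀ (J : {J : Fin p → ℤ // P J}) (i : Fin p)
      (h : ((idx J i : Fin p) : ℕ) < p / 2),
      J.1 i = (if 0 < J.1 i then 1 else -1) *
        (((vals J ⟨(idx J i : Fin p), h⟩ : Fin n) : ℤ) + 1) := by
    intro J i h
    rw [hvals J i h]
    rcases lt_trichotomy (J.1 i) 0 with hlt | heq | hgt
    · rw [if_neg (by omega), abs_of_neg hlt]; ring
    · exact absurd heq (J.2.1 i).1
    · rw [if_pos hgt, abs_of_pos hgt, one_mul]
  -- the injection
  let Φ : {J : Fin p → ℤ // P J} →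
      (Fin p → Bool) × (Fin p → Fin p) × (Fin (p / 2) → Fin n) :=
    fun J => (fun i => decide (0 < J.1 i), idx J, vals J)
  have hΦ : Function.Injective Φ := by
    intro J J' h
    simp only [Φ, Prod.mk.injEq] at h
    obtain ⟨h1, h2, h3⟩ := h
    apply Subtype.ext; funext i
    have e2 : idx J i = idx J' i := by rw [h2]
    have hl : ((idx J i : Fin p) : ℕ) < p / 2 := idxlt' J i
    have hl' : ((idx J' i : Fin p) : ℕ) < p / 2 := idxlt' J' i
    rw [recov J i hl, recov J' i hl']
    have hsgn : (0 < J.1 i) ↔ (0 < J'.1 i) := by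
      have := congrFun h1 i
      simpa using this
    have hv : vals J ⟨(idx J i : Fin p), hl⟩ = vals J' ⟨(idx J' i : Fin p), hl'⟩ := by
      rw [h3]
      congr 1
      rw [Fin.mk.injEq]
      exact congrArg Fin.val e2
    rw [hv]
    by_cases hc : 0 < J.1 i
    · rw [if_pos hc, if_pos (hsgn.mp hc)]
    · rw [if_neg hc, if_neg (fun hh => hc (hsgn.mpr hh))]
  calc Nat.card {J : Fin p → ℤ // P J}
      ≤ Nat.card ((Fin p → Bool) × (Fin p → Fin p) × (Fin (p / 2) → Fin n)) :=
        Nat.card_le_card_of_injective Φ hΦ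
    _ = 2 ^ p * p ^ p * n ^ (p / 2) := by
        simp [Nat.card_eq_fintype_card, Fintype.card_fun, mul_assoc]
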